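/- arXiv:1404.6711 — 2 statements merged into one kernel-verified Lean document; each statement's English description precedes it below -/
import Mathlib

section
/- Let R be a commutative noetherian ring, let 𝔞 be an ideal of R, and let 𝒮_1 and 𝒮_2 be Serre subcategories of R-modules. If both the extension class ⟨𝒮_1, 𝒮_2⟩ and the intersection 𝒮_1 ∩ 𝒮_2 satisfy the C_𝔞 condition, then 𝒮_1 and 𝒮_2 each satisfy the C_𝔞 condition. -/
universe u

open Submodule

variable {R : Type u} [CommRing R]

/-- `Γ_a(M)`, the `a`-torsion submodule of `M`: the set of elements annihilated by
some power of the ideal `a`. -/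
def torsionGamma (a : Ideal R) (M : Type u) [AddCommGroup M] [Module R M] :
    Submodule R M :=
  ⨆ n : ℕ, Submodule.torsionBySet R M ((a ^ n : Ideal R) : Set R)

/-- The class `S` satisfies the condition `C_a` on the module `M`:
if `Γ_a(M) = M` and `(0 :_M a) ∈ S` then `M ∈ S`. -/
def CCondOn (S : ModuleCat.{u} R → Prop) (a : Ideal R) (M : ModuleCat.{u} R) : Prop :=
  torsionGamma a M = ⊤ →
    S (ModuleCat.of R (Submodule.torsionBySet R M (a : Set R))) → S M

/-- The class `S` satisfies the condition `C_a` (on every `R`-module). -/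
def CCond (S : ModuleCat.{u} R → Prop) (a : Ideal R) : Prop :=
  ∀ M : ModuleCat.{u} R, CCondOn S a M

/-- The class `S` is closed under isomorphisms of `R`-modules. -/
def IsoClosed (S : ModuleCat.{u} R → Prop) : Prop :=
  ∀ ⦃M N : ModuleCat.{u} R⦄, (M ≃ₗ[R] N) → S M → S N

/-- `S` is a Serre subcategory of the category of `R`-modules: it is closed under
isomorphisms, contains the zero module, and is closed under submodules, quotient modules
and extensions. -/
structure IsSerreClass (S : ModuleCat.{u} R → Prop) : Prop where
  iso : IsoClosed S
  zero : ∀ M : ModuleCat.{u} R, Subsingleton M → S M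
  subobj : ∀ (M : ModuleCat.{u} R) (N : Submodule R M), S M → S (ModuleCat.of R N)
  quot : ∀ (M : ModuleCat.{u} R) (N : Submodule R M), S M → S (ModuleCat.of R (M ⧸ N))
  extension : ∀ (M : ModuleCat.{u} R) (N : Submodule R M),
    S (ModuleCat.of R N) → S (ModuleCat.of R (M ⧸ N)) → S M

/-- The extension class `⟨S₁, S₂⟩`: modules `M` possessing a submodule `N ∈ S₁`
with `M/N ∈ S₂`. -/
def extClass (S₁ S₂ : ModuleCat.{u} R → Prop) (M : ModuleCat.{u} R) : Prop :=
  ∃ N : Submodule R M, S₁ (ModuleCat.of R N) ∧ S₂ (ModuleCat.of R (M ⧸ N))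

section Helpers

variable {S : ModuleCat.{u} R → Prop}

lemma serre_equiv (hS : IsSerreClass S) {X Y : Type u} [AddCommGroup X] [Module R X]
    [AddCommGroup Y] [Module R Y] (e : X ≃ₗ[R] Y) (hX : S (ModuleCat.of R X)) :
    S (ModuleCat.of R Y) :=
  hS.iso (M := ModuleCat.of R X) (N := ModuleCat.of R Y) e hX

lemma serre_inj (hS : IsSerreClass S) {X Y : Type u} [AddCommGroup X] [Module R X]
    [AddCommGroup Y] [Module R Y] (f : X →ₗ[R] Y) (hf : Function.Injective f)
    (hY : S (ModuleCat.of R Y)) : S (ModuleCat.of R X) :=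
  serre_equiv hS (LinearEquiv.ofInjective f hf).symm
    (hS.subobj (ModuleCat.of R Y) (LinearMap.range f) hY)

lemma serre_surj (hS : IsSerreClass S) {X Y : Type u} [AddCommGroup X] [Module R X]
    [AddCommGroup Y] [Module R Y] (f : X →ₗ[R] Y) (hf : Function.Surjective f)
    (hX : S (ModuleCat.of R X)) : S (ModuleCat.of R Y) :=
  serre_equiv hS (f.quotKerEquivOfSurjective hf)
    (hS.quot (ModuleCat.of R X) (LinearMap.ker f) hX)

lemma serre_prod (hS : IsSerreClass S) {X Y : Type u} [AddCommGroup X] [Module R X]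
    [AddCommGroup Y] [Module R Y] (hX : S (ModuleCat.of R X)) (hY : S (ModuleCat.of R Y)) :
    S (ModuleCat.of R (X × Y)) := by
  refine hS.extension (ModuleCat.of R (X × Y)) (LinearMap.ker (LinearMap.snd R X Y)) ?_ ?_
  · refine serre_inj hS ((LinearMap.fst R X Y).comp (Submodule.subtype _)) ?_ hX
    rintro ⟨⟨x1, x2⟩, hx⟩ ⟨⟨y1, y2⟩, hy⟩ h
    simp only [LinearMap.mem_ker, LinearMap.snd_apply] at hx hy
    simp only [LinearMap.comp_apply, Submodule.coe_subtype, LinearMap.fst_apply, LinearMap.snd_apply] at h hx hy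
    exact Subtype.ext (Prod.ext h (hx.trans hy.symm))
  · exact serre_equiv hS ((LinearMap.snd R X Y).quotKerEquivOfSurjective
      (fun y => ⟨(0, y), rfl⟩)).symm hY

lemma serre_pi (hS : IsSerreClass S) {X : Type u} [AddCommGroup X] [Module R X]
    (hX : S (ModuleCat.of R X)) : ∀ n : ℕ, S (ModuleCat.of R (Fin n → X))
  | 0 => hS.zero (ModuleCat.of R (Fin 0 → X)) (by infer_instance)
  | (n+1) => by
    have e : (Fin (n+1) → X) ≃ₗ[R] (X × (Fin n → X)) :=
      { Fin.consEquiv (fun _ => X) |>.symm.trans (Equiv.refl _) with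
        toFun := fun f => (f 0, fun i => f i.succ)
        invFun := fun p => Fin.cons p.1 p.2
        map_add' := by intros; rfl
        map_smul' := by intros; rfl }
    exact serre_equiv hS e.symm (serre_prod hS hX (serre_pi hS hX n))

end Helpers

section Gamma

variable (a : Ideal R) {M : Type u} [AddCommGroup M] [Module R M]

lemma torsionGamma_directed :
    Directed (· ≤ ·) (fun n : ℕ => Submodule.torsionBySet R M ((a ^ n : Ideal R) : Set R)) := by
  refine Monotone.directed_le (fun n k hnk => ?_)
  exact Submodule.torsionBySet_le_torsionBySet_of_subset
    (Ideal.pow_le_pow_right hnk)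

lemma mem_torsionGamma_iff {m : M} :
    m ∈ torsionGamma a M ↔ ∃ n : ℕ, ∀ y ∈ (a ^ n : Ideal R), y • m = 0 := by
  rw [torsionGamma, Submodule.mem_iSup_of_directed _ (torsionGamma_directed a)]
  refine exists_congr fun n => ?_
  rw [Submodule.mem_torsionBySet_iff]
  exact ⟨fun h y hy => h ⟨y, hy⟩, fun h c => h c.1 c.2⟩

lemma torsionGamma_quot (h : torsionGamma a M = ⊤) (N : Submodule R M) :
    torsionGamma a (M ⧸ N) = ⊤ := by
  rw [eq_top_iff]
  rintro x -
  obtain ⟨m, rfl⟩ := N.mkQ_surjective x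
  have hm : m ∈ torsionGamma a M := h ▸ Submodule.mem_top
  obtain ⟨n, hn⟩ := (mem_torsionGamma_iff a).mp hm
  refine (mem_torsionGamma_iff a).mpr ⟨n, fun y hy => ?_⟩
  rw [← map_smul, hn y hy, map_zero]

lemma torsionGamma_sub (h : torsionGamma a M = ⊤) (N : Submodule R M) :
    torsionGamma a N = ⊤ := by
  rw [eq_top_iff]
  rintro x -
  have hm : (x : M) ∈ torsionGamma a M := h ▸ Submodule.mem_top
  obtain ⟨n, hn⟩ := (mem_torsionGamma_iff a).mp hm
  refine (mem_torsionGamma_iff a).mpr ⟨n, fun y hy => ?_⟩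
  exact Subtype.ext (by simpa using hn y hy)

end Gamma

/-- If the extension class `⟨S₁, S₂⟩` and the intersection `S₁ ∩ S₂` satisfy the `C_a`
condition, then `S₁` and `S₂` each satisfy the `C_a` condition. -/
theorem stmt11 [IsNoetherianRing R] (a : Ideal R)
    (S₁ S₂ : ModuleCat.{u} R → Prop)
    (hS₁ : IsSerreClass S₁) (hS₂ : IsSerreClass S₂)
    (hext : CCond (extClass S₁ S₂) a)
    (hcap : CCond (fun M => S₁ M ∧ S₂ M) a) :
    CCond S₁ a ∧ CCond S₂ a := by
  constructor
  · -- S₁ satisfies C_a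
    intro M hM hH
    -- Step 1: M belongs to the extension class
    obtain ⟨N, hN₁, hQ₂⟩ : extClass S₁ S₂ M := by
      refine hext M hM ⟨⊤, ?_, ?_⟩
      · exact serre_equiv hS₁ Submodule.topEquiv.symm hH
      · exact hS₂.zero _ (Submodule.Quotient.subsingleton_iff.mpr rfl)
    -- generators of a
    obtain ⟨r, x, hx⟩ :=
      Submodule.fg_iff_exists_fin_generating_family.mp (IsNoetherian.noetherian a)
    have hxa : ∀ i, x i ∈ a := fun i => hx ▸ Submodule.subset_span (Set.mem_range_self i)
    -- K is the preimage of the socle of M/N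
    set K : Submodule R M :=
      Submodule.comap N.mkQ (Submodule.torsionBySet R (M ⧸ N) (a : Set R)) with hK
    have hKmem : ∀ (k : K) (y : R), y ∈ a → y • (k : M) ∈ N := by
      rintro ⟨k, hk⟩ y hy
      have h1 : N.mkQ (y • k) = 0 := by
        rw [map_smul]
        exact (Submodule.mem_torsionBySet_iff _ _).mp hk ⟨y, hy⟩
      rw [N.mkQ_apply] at h1
      exact (Submodule.Quotient.mk_eq_zero N).mp h1
    -- the map K → N^r given by multiplication by the generators
    set f : K →ₗ[R] (Fin r → N) :=
      { toFun := fun k i => ⟨x i • (k : M), hKmem k (x i) (hxa i)⟩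
        map_add' := by intros u v; funext i; exact Subtype.ext (smul_add _ _ _)
        map_smul' := by
          intros c u; funext i
          exact Subtype.ext (smul_comm (x i) c (u : M)) } with hf
    -- its kernel is the socle of M, viewed inside K
    have hsocK : Submodule.torsionBySet R M (a : Set R) ≤ K := by
      intro m hm
      refine (Submodule.mem_torsionBySet_iff _ _).mpr fun c => ?_
      show c.1 • N.mkQ m = 0
      rw [← map_smul, (Submodule.mem_torsionBySet_iff _ _).mp hm c, map_zero]
    have hker : LinearMap.ker f =
        Submodule.comap K.subtype (Submodule.torsionBySet R M (a : Set R)) := by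
      ext k
      simp only [LinearMap.mem_ker, Submodule.mem_comap, Submodule.coe_subtype]
      constructor
      · intro h
        rw [show (a : Set R) = ↑(Ideal.span (Set.range x)) by rw [Ideal.span, hx],
          ← Submodule.torsionBySet_eq_torsionBySet_span]
        refine (Submodule.mem_torsionBySet_iff _ _).mpr ?_
        rintro ⟨c, i, rfl⟩
        exact congrArg Subtype.val (congrFun h i)
      · intro h
        funext i
        exact Subtype.ext ((Submodule.mem_torsionBySet_iff _ _).mp h ⟨x i, hxa i⟩)
    -- S₁ contains K
    have hKS₁ : S₁ (ModuleCat.of R K) := by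
      refine hS₁.extension (ModuleCat.of R K)
        (Submodule.comap K.subtype (Submodule.torsionBySet R M (a : Set R))) ?_ ?_
      · exact serre_equiv hS₁ (Submodule.comapSubtypeEquivOfLe hsocK).symm hH
      · refine serre_equiv hS₁ (Submodule.quotEquivOfEq _ _ hker)
          (serre_equiv hS₁ f.quotKerEquivRange.symm
            (hS₁.subobj (ModuleCat.of R (Fin r → N)) (LinearMap.range f)
              (serre_pi hS₁ hN₁ r)))
    -- the socle of M/N is a quotient of K, hence lies in S₁; it lies in S₂ as a submodule
    have hsoc₁ : S₁ (ModuleCat.of R (Submodule.torsionBySet R (M ⧸ N) (a : Set R))) := by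
      refine serre_surj hS₁
        (f := { toFun := fun k : K => (⟨N.mkQ k, k.2⟩ :
                  Submodule.torsionBySet R (M ⧸ N) (a : Set R))
                map_add' := by intros; exact Subtype.ext (map_add _ _ _)
                map_smul' := by intros; exact Subtype.ext (map_smul _ _ _) }) ?_ hKS₁
      rintro ⟨v, hv⟩
      obtain ⟨m, rfl⟩ := N.mkQ_surjective v
      exact ⟨⟨m, hv⟩, rfl⟩
    have hsoc₂ : S₂ (ModuleCat.of R (Submodule.torsionBySet R (M ⧸ N) (a : Set R))) :=
      hS₂.subobj (ModuleCat.of R (M ⧸ N)) (Submodule.torsionBySet R (M ⧸ N) (a : Set R)) hQ₂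
    have hQ₁ : S₁ (ModuleCat.of R (M ⧸ N)) :=
      (hcap (ModuleCat.of R (M ⧸ N)) (torsionGamma_quot a hM N) ⟨hsoc₁, hsoc₂⟩).1
    exact hS₁.extension M N hN₁ hQ₁
  · -- S₂ satisfies C_a
    intro M hM hH
    obtain ⟨N, hN₁, hQ₂⟩ : extClass S₁ S₂ M := by
      refine hext M hM ⟨⊥, ?_, ?_⟩
      · exact hS₁.zero _ inferInstance
      · exact serre_equiv hS₂ (Submodule.quotEquivOfEqBot ⊥ rfl).symm hH
    -- the socle of N lies in S₁ (submodule of N) and in S₂ (submodule of the socle of M)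
    have hs₁ : S₁ (ModuleCat.of R (Submodule.torsionBySet R N (a : Set R))) :=
      hS₁.subobj (ModuleCat.of R N) (Submodule.torsionBySet R N (a : Set R)) hN₁
    have hs₂ : S₂ (ModuleCat.of R (Submodule.torsionBySet R N (a : Set R))) := by
      refine serre_inj hS₂
        (f := { toFun := fun n : Submodule.torsionBySet R N (a : Set R) =>
                  (⟨(n : N), by
                    refine (Submodule.mem_torsionBySet_iff _ _).mpr fun c => ?_
                    exact congrArg Subtype.val
                      ((Submodule.mem_torsionBySet_iff _ _).mp n.2 c)⟩ :
                    Submodule.torsionBySet R M (a : Set R))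
                map_add' := by intros; rfl
                map_smul' := by intros; rfl }) ?_ hH
      intro u v h
      simp only [LinearMap.coe_mk, AddHom.coe_mk, Subtype.mk.injEq] at h
      exact Subtype.ext (Subtype.ext h)
    have hNS₂ : S₂ (ModuleCat.of R N) :=
      (hcap (ModuleCat.of R N) (torsionGamma_sub a hM N) ⟨hs₁, hs₂⟩).2
    exact hS₂.extension M N hNS₂ hQ₂
end

section
/- Let R be a commutative noetherian ring, let 𝔞 be an ideal of R, and let 𝒮 be a class of R-modules closed under taking submodules and under arbitrary direct sums. Then the class 𝒮_𝔞 = {M : Γ_𝔞(M) = M and (0 :_M 𝔞) ∈ 𝒮 imply M ∈ 𝒮} is closed under arbitrary direct sums: if (M_i)_{i ∈ I} is any family of R-modules with M_i ∈ 𝒮_𝔞 for all i, then the direct sum ⨁_{i∈I} M_i ∈ 𝒮_𝔞. -/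
universe u

open Submodule

variable {R : Type u} [CommRing R]

open DirectSum

set_option maxHeartbeats 1000000

lemma mem_torsionGamma_iff_s15 {R : Type u} [CommRing R] {M : Type u} [AddCommGroup M]
    [Module R M] (a : Ideal R) (x : M) :
    x ∈ torsionGamma a M ↔ ∃ n, x ∈ Submodule.torsionBySet R M ((a ^ n : Ideal R) : Set R) := by
  have hd : Directed (· ≤ ·)
      (fun n : ℕ => Submodule.torsionBySet R M ((a ^ n : Ideal R) : Set R)) := by
    intro m n
    exact ⟨max m n, Submodule.torsionBySet_le_torsionBySet_of_subset
        (Ideal.pow_le_pow_right (le_max_left m n)),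
      Submodule.torsionBySet_le_torsionBySet_of_subset
        (Ideal.pow_le_pow_right (le_max_right m n))⟩
  exact Submodule.mem_iSup_of_directed _ hd


/-- If `S` is closed under submodules and arbitrary direct sums, then the class
`S_a = {M : S satisfies C_a on M}` is closed under arbitrary direct sums. -/
theorem stmt15 [IsNoetherianRing R] (a : Ideal R)
    (S : ModuleCat.{u} R → Prop)
    (hiso : IsoClosed S)
    (hsub : ∀ (M : ModuleCat.{u} R) (N : Submodule R M), S M → S (ModuleCat.of R N))
    (hsum : ∀ (I : Type u) (f : I → ModuleCat.{u} R),
      (∀ i, S (f i)) → S (ModuleCat.of R (⨁ i, f i)))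
    (I : Type u) (M : I → ModuleCat.{u} R)
    (hM : ∀ i, CCondOn S a (M i)) :
    CCondOn S a (ModuleCat.of R (⨁ i, M i)) := by
  classical
  intro htop h0
  have hMiS : ∀ i, S (M i) := by
    intro i
    refine hM i ?_ ?_
    · rw [eq_top_iff]
      intro x _
      have hx : (DirectSum.lof R I (fun j => (M j : Type u)) i x)
          ∈ torsionGamma a (⨁ j, (M j : Type u)) :=
        Submodule.eq_top_iff'.mp htop _
      obtain ⟨n, hn⟩ := (mem_torsionGamma_iff_s15 a _).mp hx
      refine (mem_torsionGamma_iff_s15 a x).mpr ⟨n, ?_⟩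
      rw [Submodule.mem_torsionBySet_iff] at hn ⊢
      intro r
      have h2 : ((r : R) • (DirectSum.lof R I (fun j => (M j : Type u)) i) x) i = 0 := by
        rw [hn r]; rfl
      simpa only [DirectSum.smul_apply, DirectSum.lof_apply] using h2
    · -- S (torsionBySet (M i) a): it is iso to a submodule of torsionBySet (⊕M) a
      have hmem : ∀ m : Submodule.torsionBySet R (M i) (a : Set R),
          (DirectSum.lof R I (fun j => (M j : Type u)) i) m.1
            ∈ Submodule.torsionBySet R (⨁ j, (M j : Type u)) (a : Set R) := by
        intro m
        rw [Submodule.mem_torsionBySet_iff]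
        intro r
        have hm := (Submodule.mem_torsionBySet_iff _ _).mp m.2 r
        rw [← map_smul, hm, map_zero]
      let g : Submodule.torsionBySet R (M i) (a : Set R) →ₗ[R]
          Submodule.torsionBySet R (⨁ j, (M j : Type u)) (a : Set R) :=
        LinearMap.codRestrict _
          ((DirectSum.lof R I (fun j => (M j : Type u)) i) ∘ₗ
            (Submodule.torsionBySet R (M i) (a : Set R)).subtype) hmem
      have hginj : Function.Injective g := by
        intro x y hxy
        have h1 : ((DirectSum.lof R I (fun j => (M j : Type u)) i) x.1) i
            = ((DirectSum.lof R I (fun j => (M j : Type u)) i) y.1) i :=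
          congrArg (fun z => (z : ⨁ j, (M j : Type u)) i) (congrArg Subtype.val hxy)
        apply Subtype.ext
        simpa [DirectSum.lof_apply] using h1
      let e := LinearEquiv.ofInjective g hginj
      exact hiso (M := ModuleCat.of R (LinearMap.range g))
        (N := ModuleCat.of R (Submodule.torsionBySet R (M i) (a : Set R))) e.symm
        (hsub (ModuleCat.of R
          (Submodule.torsionBySet R (⨁ j, (M j : Type u)) (a : Set R)))
          (LinearMap.range g) h0)
  exact hsum I M hMiS
end
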